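/- Let A be an integral domain which is finitely generated as a ℂ-algebra and is a Dedekind domain, and let I and J be nonzero ideals of A. Then the rings A[I] and A[J] are Morita equivalent; that is, the categories of left A[I]-modules and of left A[J]-modules are equivalent as additive categories. -/

import Mathlib

universe u

section OPE

variable (A : Type u) [CommRing A] [Algebra ℂ A] (I : Type u) [AddCommGroup I] [Module A I]

/-- The one-point extension `A[I]`: triples `(a, b, c)` with `a ∈ A`, `b ∈ I`, `c ∈ ℂ`,
thought of as upper-triangular matrices `[[a, b], [0, c]]`. -/
abbrev OPE : Type u := A × I × ℂ

variable {A I}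

/-- Multiplication of the one-point extension:
`(a,b,c)·(a',b',c') = (a a', a•b' + c'•b, c c')`, where `ℂ` acts on `I` through
`algebraMap ℂ A`. -/
def OPE.mul (x y : OPE A I) : OPE A I :=
  (x.1 * y.1, x.1 • y.2.1 + algebraMap ℂ A y.2.2 • x.2.1, x.2.2 * y.2.2)

instance OPE.instMul : Mul (OPE A I) := ⟨OPE.mul⟩

instance OPE.instOne : One (OPE A I) := ⟨(1, 0, 1)⟩

instance OPE.instRing : Ring (OPE A I) where
  __ := (inferInstance : AddCommGroup (OPE A I))
  mul := OPE.mul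
  one := (1, 0, 1)
  mul_assoc x y z := by
    show OPE.mul (OPE.mul x y) z = OPE.mul x (OPE.mul y z)
    unfold OPE.mul
    refine Prod.ext (mul_assoc _ _ _) (Prod.ext ?_ (mul_assoc _ _ _))
    show (x.1 * y.1) • z.2.1 + algebraMap ℂ A z.2.2 • (x.1 • y.2.1 + algebraMap ℂ A y.2.2 • x.2.1)
        = x.1 • (y.1 • z.2.1 + algebraMap ℂ A z.2.2 • y.2.1) + algebraMap ℂ A (y.2.2 * z.2.2) • x.2.1
    rw [map_mul]
    module
  one_mul x := by
    show OPE.mul (1, 0, 1) x = x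
    unfold OPE.mul
    simp
  mul_one x := by
    show OPE.mul x (1, 0, 1) = x
    unfold OPE.mul
    simp
  left_distrib x y z := by
    show OPE.mul x (y + z) = OPE.mul x y + OPE.mul x z
    unfold OPE.mul
    refine Prod.ext (mul_add _ _ _) (Prod.ext ?_ (mul_add _ _ _))
    show x.1 • (y.2.1 + z.2.1) + algebraMap ℂ A (y.2.2 + z.2.2) • x.2.1
        = (x.1 • y.2.1 + algebraMap ℂ A y.2.2 • x.2.1) + (x.1 • z.2.1 + algebraMap ℂ A z.2.2 • x.2.1)
    rw [map_add]
    module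
  right_distrib x y z := by
    show OPE.mul (x + y) z = OPE.mul x z + OPE.mul y z
    unfold OPE.mul
    refine Prod.ext (add_mul _ _ _) (Prod.ext ?_ (add_mul _ _ _))
    show (x.1 + y.1) • z.2.1 + algebraMap ℂ A z.2.2 • (x.2.1 + y.2.1)
        = (x.1 • z.2.1 + algebraMap ℂ A z.2.2 • x.2.1) + (y.1 • z.2.1 + algebraMap ℂ A z.2.2 • y.2.1)
    module
  zero_mul x := by
    show OPE.mul 0 x = 0
    unfold OPE.mul
    simp
  mul_zero x := by
    show OPE.mul x 0 = 0
    unfold OPE.mul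
    simp

/-- The structure map `ℂ → A[I]`, `c ↦ (algebraMap ℂ A c, 0, c)`. -/
def OPE.algMap : ℂ →+* OPE A I where
  toFun c := (algebraMap ℂ A c, 0, c)
  map_one' := by simp only [map_one]; rfl
  map_mul' c d := by
    show _ = OPE.mul _ _
    unfold OPE.mul
    simp
  map_zero' := by simp only [map_zero]; rfl
  map_add' c d := by
    have : ∀ x y : OPE A I, x + y = (x.1 + y.1, x.2.1 + y.2.1, x.2.2 + y.2.2) := fun x y => rfl
    rw [this]
    simp only [map_add, add_zero]

instance OPE.instAlgebra : Algebra ℂ (OPE A I) :=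
  (OPE.algMap (A := A) (I := I)).toAlgebra' (by
    intro c x
    show OPE.mul _ _ = OPE.mul _ _
    unfold OPE.mul OPE.algMap
    simp [mul_comm])

/-- The idempotent `e = [[1,0],[0,0]]` of `A[I]`. -/
def OPE.e : OPE A I := (1, 0, 0)

/-- The idempotent `e_∞ = [[0,0],[0,1]]` of `A[I]`. -/
def OPE.einf : OPE A I := (0, 0, 1)

end OPE

namespace Stmt10
set_option linter.unusedSectionVars false
section gens
variable (A : Type u) [CommRing A] [Algebra ℂ A]
variable (V : Type u) [AddCommGroup V] [Module A V]

def ρa (a : A) : OPE A V := (a, 0, 0)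
def ρi (i : V) : OPE A V := (0, i, 0)
def ρc (c : ℂ) : OPE A V := (0, 0, c)

variable {A V}

lemma mul_def (x y : OPE A V) : x * y = OPE.mul x y := rfl
lemma add_def (x y : OPE A V) : x + y = (x.1 + y.1, x.2.1 + y.2.1, x.2.2 + y.2.2) := rfl
lemma zero_def : (0 : OPE A V) = (0, 0, 0) := rfl

@[simp] lemma ρa_mul_ρa (a b : A) : ρa A V a * ρa A V b = ρa A V (a * b) := by
  rw [mul_def]; unfold OPE.mul ρa; simp
@[simp] lemma ρa_mul_ρi (a : A) (i : V) : ρa A V a * ρi A V i = ρi A V (a • i) := by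
  rw [mul_def]; unfold OPE.mul ρa ρi; simp
@[simp] lemma ρa_mul_ρc (a : A) (c : ℂ) : ρa A V a * ρc A V c = 0 := by
  rw [mul_def, zero_def]; unfold OPE.mul ρa ρc; simp
@[simp] lemma ρi_mul_ρa (i : V) (a : A) : ρi A V i * ρa A V a = 0 := by
  rw [mul_def, zero_def]; unfold OPE.mul ρi ρa; simp
@[simp] lemma ρi_mul_ρi (i j : V) : ρi A V i * ρi A V j = 0 := by
  rw [mul_def, zero_def]; unfold OPE.mul ρi; simp
@[simp] lemma ρi_mul_ρc (i : V) (c : ℂ) : ρi A V i * ρc A V c = ρi A V (algebraMap ℂ A c • i) := by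
  rw [mul_def]; unfold OPE.mul ρi ρc; simp
@[simp] lemma ρc_mul_ρa (c : ℂ) (a : A) : ρc A V c * ρa A V a = 0 := by
  rw [mul_def, zero_def]; unfold OPE.mul ρc ρa; simp
@[simp] lemma ρc_mul_ρi (c : ℂ) (i : V) : ρc A V c * ρi A V i = 0 := by
  rw [mul_def, zero_def]; unfold OPE.mul ρc ρi; simp
@[simp] lemma ρc_mul_ρc (c d : ℂ) : ρc A V c * ρc A V d = ρc A V (c * d) := by
  rw [mul_def]; unfold OPE.mul ρc; simp

@[simp] lemma ρa_add (a b : A) : ρa A V (a + b) = ρa A V a + ρa A V b := by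
  rw [add_def]; unfold ρa; simp
@[simp] lemma ρi_add (i j : V) : ρi A V (i + j) = ρi A V i + ρi A V j := by
  rw [add_def]; unfold ρi; simp
@[simp] lemma ρc_add (c d : ℂ) : ρc A V (c + d) = ρc A V c + ρc A V d := by
  rw [add_def]; unfold ρc; simp
@[simp] lemma ρa_zero : ρa A V (0 : A) = 0 := rfl
@[simp] lemma ρi_zero : ρi A V (0 : V) = 0 := rfl
@[simp] lemma ρc_zero : ρc A V (0 : ℂ) = 0 := rfl

lemma ρa_one_add_ρc_one : ρa A V (1 : A) + ρc A V (1 : ℂ) = 1 := by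
  rw [add_def]; unfold ρa ρc; show _ = (1,0,1); simp

variable (A V) in
/-- `ρa` as an additive monoid hom. -/
def ρaHom : A →+ OPE A V where
  toFun := ρa A V
  map_zero' := rfl
  map_add' := ρa_add

end gens

section modules
variable (A : Type u) [CommRing A] [Algebra ℂ A]
variable (V : Type u) [AddCommGroup V] [Module A V]
variable (M : Type u) [AddCommGroup M] [Module (OPE A V) M]

/-- The "A-part" of a module over `OPE A V`. -/
def MA : AddSubgroup M where
  carrier := {m | ρa A V 1 • m = m}
  add_mem' {x y} hx hy := by
    show ρa A V 1 • (x + y) = x + y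
    rw [smul_add]
    rw [show ρa A V 1 • x = x from hx, show ρa A V 1 • y = y from hy]
  zero_mem' := smul_zero _
  neg_mem' {x} hx := by
    show ρa A V 1 • (-x) = -x
    rw [smul_neg, show ρa A V 1 • x = x from hx]

/-- The "∞-part" of a module over `OPE A V`. -/
def Minf : AddSubgroup M where
  carrier := {m | ρc A V 1 • m = m}
  add_mem' {x y} hx hy := by
    show ρc A V 1 • (x + y) = x + y
    rw [smul_add]
    rw [show ρc A V 1 • x = x from hx, show ρc A V 1 • y = y from hy]
  zero_mem' := smul_zero _
  neg_mem' {x} hx := by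
    show ρc A V 1 • (-x) = -x
    rw [smul_neg, show ρc A V 1 • x = x from hx]

variable {A V M}

lemma mem_MA_iff {m : M} : m ∈ MA A V M ↔ ρa A V 1 • m = m := Iff.rfl
lemma mem_Minf_iff {m : M} : m ∈ Minf A V M ↔ ρc A V 1 • m = m := Iff.rfl

lemma ρa_smul_mem_MA (a : A) (m : M) : ρa A V a • m ∈ MA A V M := by
  rw [mem_MA_iff, ← mul_smul, ρa_mul_ρa, one_mul]
lemma ρi_smul_mem_MA (i : V) (m : M) : ρi A V i • m ∈ MA A V M := by
  rw [mem_MA_iff, ← mul_smul, ρa_mul_ρi, one_smul]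
lemma ρc_smul_mem_Minf (c : ℂ) (m : M) : ρc A V c • m ∈ Minf A V M := by
  rw [mem_Minf_iff, ← mul_smul, ρc_mul_ρc, one_mul]

instance instSMulAMA : SMul A ↥(MA A V M) :=
  ⟨fun a m => ⟨ρa A V a • m.val, ρa_smul_mem_MA a m.val⟩⟩

@[simp] lemma smulA_val (a : A) (m : ↥(MA A V M)) :
    (a • m : ↥(MA A V M)).val = ρa A V a • m.val := rfl

instance instModuleAMA : Module A ↥(MA A V M) where
  one_smul m := Subtype.ext (by rw [smulA_val]; exact m.2)
  mul_smul a b m := Subtype.ext (by simp only [smulA_val, ← mul_smul, ρa_mul_ρa])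
  smul_zero a := Subtype.ext (by simp only [smulA_val, ZeroMemClass.coe_zero, smul_zero])
  smul_add a m n := Subtype.ext (by
    simp only [smulA_val, AddSubgroup.coe_add, smul_add])
  add_smul a b m := Subtype.ext (by
    simp only [smulA_val, AddSubgroup.coe_add, ρa_add, add_smul])
  zero_smul m := Subtype.ext (by
    simp only [smulA_val, ρa_zero, zero_smul, ZeroMemClass.coe_zero])

/-- The ∞-scalar action on `Minf`. -/
def cSMul (c : ℂ) (v : ↥(Minf A V M)) : ↥(Minf A V M) :=
  ⟨ρc A V c • v.val, ρc_smul_mem_Minf c v.val⟩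

@[simp] lemma cSMul_val (c : ℂ) (v : ↥(Minf A V M)) : (cSMul c v).val = ρc A V c • v.val := rfl

@[simp] lemma cSMul_one (v : ↥(Minf A V M)) : cSMul 1 v = v :=
  Subtype.ext (by rw [cSMul_val]; exact v.2)
@[simp] lemma cSMul_zero (c : ℂ) : cSMul c (0 : ↥(Minf A V M)) = 0 :=
  Subtype.ext (by rw [cSMul_val]; simp)
@[simp] lemma cSMul_zero' (v : ↥(Minf A V M)) : cSMul 0 v = 0 :=
  Subtype.ext (by rw [cSMul_val]; simp)
lemma cSMul_mul (c d : ℂ) (v : ↥(Minf A V M)) : cSMul (c * d) v = cSMul c (cSMul d v) :=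
  Subtype.ext (by simp only [cSMul_val, ← mul_smul, ρc_mul_ρc])
lemma cSMul_add (c : ℂ) (v w : ↥(Minf A V M)) : cSMul c (v + w) = cSMul c v + cSMul c w :=
  Subtype.ext (by push_cast [cSMul_val]; rw [smul_add])
lemma cSMul_add' (c d : ℂ) (v : ↥(Minf A V M)) : cSMul (c + d) v = cSMul c v + cSMul d v :=
  Subtype.ext (by push_cast [cSMul_val]; rw [ρc_add, add_smul])

end modules

section functorF
variable {A : Type u} [CommRing A] [Algebra ℂ A] [IsDomain A]

/-- Transport data for the Morita functor between `OPE A ↥I` and `OPE A ↥J`. -/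
structure MD (I J : Ideal A) where
  X : Ideal A
  d : A
  hd : d ≠ 0
  hXJ : ∀ x ∈ X, ∀ j ∈ J, ∃ i ∈ I, d * i = x * j

variable {I J : Ideal A}

noncomputable def MD.divI (D : MD I J) (x : ↥D.X) (j : ↥J) : ↥I :=
  ⟨(D.hXJ x x.2 j j.2).choose, (D.hXJ x x.2 j j.2).choose_spec.1⟩

lemma MD.divI_spec (D : MD I J) (x : ↥D.X) (j : ↥J) :
    D.d * (D.divI x j : A) = (x : A) * (j : A) :=
  (D.hXJ x x.2 j j.2).choose_spec.2

lemma MD.divI_eq (D : MD I J) (x : ↥D.X) (j : ↥J) (i : ↥I)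
    (h : D.d * (i : A) = (x : A) * (j : A)) : D.divI x j = i :=
  Subtype.ext (mul_left_cancel₀ D.hd ((D.divI_spec x j).trans h.symm))

lemma MD.divI_add_left (D : MD I J) (x x' : ↥D.X) (j : ↥J) :
    D.divI (x + x') j = D.divI x j + D.divI x' j := by
  refine (D.divI_eq _ _ _ ?_).symm ▸ rfl
  push_cast
  rw [mul_add, D.divI_spec, D.divI_spec, add_mul]

lemma MD.divI_add_right (D : MD I J) (x : ↥D.X) (j j' : ↥J) :
    D.divI x (j + j') = D.divI x j + D.divI x j' := by
  refine (D.divI_eq _ _ _ ?_).symm ▸ rfl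
  push_cast
  rw [mul_add, D.divI_spec, D.divI_spec, mul_add]

lemma MD.divI_smul_left (D : MD I J) (a : A) (x : ↥D.X) (j : ↥J) :
    D.divI (a • x) j = a • D.divI x j := by
  refine (D.divI_eq _ _ _ ?_).symm ▸ rfl
  push_cast
  rw [smul_eq_mul, smul_eq_mul, mul_left_comm, D.divI_spec, mul_assoc]

lemma MD.divI_smul_right (D : MD I J) (a : A) (x : ↥D.X) (j : ↥J) :
    D.divI x (a • j) = a • D.divI x j := by
  refine (D.divI_eq _ _ _ ?_).symm ▸ rfl
  push_cast
  rw [smul_eq_mul, smul_eq_mul, mul_left_comm, D.divI_spec, mul_left_comm]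

lemma MD.divI_zero_right (D : MD I J) (x : ↥D.X) : D.divI x 0 = 0 := by
  refine D.divI_eq _ _ _ ?_
  push_cast
  rw [mul_zero, mul_zero]

variable (D : MD I J) (M : Type u) [AddCommGroup M] [Module (OPE A ↥I) M]

/-- The `J`-to-`MA` pairing used in the `OPE A ↥J`-module structure. -/
noncomputable def Phi (j : ↥J) (v : ↥(Minf A ↥I M)) : ↥D.X →ₗ[A] ↥(MA A ↥I M) where
  toFun x := ⟨ρi A ↥I (D.divI x j) • v.val, ρi_smul_mem_MA _ _⟩
  map_add' x x' := Subtype.ext (by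
    simp only [AddSubgroup.coe_add]
    rw [D.divI_add_left, ρi_add, add_smul])
  map_smul' a x := Subtype.ext (by
    simp only [RingHom.id_apply, smulA_val]
    rw [D.divI_smul_left, ← mul_smul, ρa_mul_ρi])

variable {M}

lemma Phi_val (j : ↥J) (v : ↥(Minf A ↥I M)) (x : ↥D.X) :
    (Phi D M j v x : M) = ρi A ↥I (D.divI x j) • v.val := rfl

lemma Phi_add_j (j j' : ↥J) (v : ↥(Minf A ↥I M)) :
    Phi D M (j + j') v = Phi D M j v + Phi D M j' v := by
  ext x
  simp only [LinearMap.add_apply, AddSubgroup.coe_add, Phi_val]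
  rw [D.divI_add_right, ρi_add, add_smul]

lemma Phi_add_v (j : ↥J) (v w : ↥(Minf A ↥I M)) :
    Phi D M j (v + w) = Phi D M j v + Phi D M j w := by
  ext x
  simp only [LinearMap.add_apply, AddSubgroup.coe_add, Phi_val]
  rw [smul_add]

lemma Phi_zero_j (v : ↥(Minf A ↥I M)) : Phi D M 0 v = 0 := by
  ext x
  simp only [Phi_val, LinearMap.zero_apply, ZeroMemClass.coe_zero]
  rw [D.divI_zero_right, ρi_zero, zero_smul]

lemma Phi_zero_v (j : ↥J) : Phi D M j (0 : ↥(Minf A ↥I M)) = 0 := by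
  ext x
  simp only [Phi_val, LinearMap.zero_apply, ZeroMemClass.coe_zero, smul_zero]

lemma Phi_smulA (a : A) (j : ↥J) (v : ↥(Minf A ↥I M)) :
    Phi D M (a • j) v = a • Phi D M j v := by
  ext x
  simp only [Phi_val, LinearMap.smul_apply, smulA_val]
  rw [D.divI_smul_right, ← mul_smul, ρa_mul_ρi]

lemma Phi_smulC (c : ℂ) (j : ↥J) (v : ↥(Minf A ↥I M)) :
    Phi D M (algebraMap ℂ A c • j) v = Phi D M j (cSMul c v) := by
  ext x
  simp only [Phi_val, cSMul_val]
  rw [D.divI_smul_right, ← ρi_mul_ρc]; exact mul_smul _ _ _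

variable (M) in
/-- The carrier of the Morita functor. -/
def Fc : Type u := (↥D.X →ₗ[A] ↥(MA A ↥I M)) × ↥(Minf A ↥I M)

instance : AddCommGroup (Fc D M) :=
  inferInstanceAs (AddCommGroup ((↥D.X →ₗ[A] ↥(MA A ↥I M)) × ↥(Minf A ↥I M)))

noncomputable instance instModuleFc : Module (OPE A ↥J) (Fc D M) where
  smul s p := (s.1 • p.1 + Phi D M s.2.1 p.2, cSMul s.2.2 p.2)
  one_smul p := by
    show (((1 : OPE A ↥J).1 : A) • p.1 + Phi D M (1 : OPE A ↥J).2.1 p.2,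
      cSMul (1 : OPE A ↥J).2.2 p.2) = p
    show ((1 : A) • p.1 + Phi D M 0 p.2, cSMul 1 p.2) = p
    rw [one_smul, Phi_zero_j, add_zero, cSMul_one]
    rfl
  mul_smul s t p := by
    show ((s * t).1 • p.1 + Phi D M (s * t).2.1 p.2, cSMul (s * t).2.2 p.2)
      = (s.1 • (t.1 • p.1 + Phi D M t.2.1 p.2) + Phi D M s.2.1 (cSMul t.2.2 p.2),
         cSMul s.2.2 (cSMul t.2.2 p.2))
    refine Prod.ext ?_ ?_
    · show (s.1 * t.1) • p.1 + Phi D M (s.1 • t.2.1 + algebraMap ℂ A t.2.2 • s.2.1) p.2 = _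
      rw [Phi_add_j, Phi_smulA, Phi_smulC, mul_smul, smul_add]
      abel
    · exact cSMul_mul _ _ _
  smul_zero s := by
    show (s.1 • (0 : ↥D.X →ₗ[A] ↥(MA A ↥I M)) + Phi D M s.2.1 0, cSMul s.2.2 0) = 0
    rw [smul_zero, Phi_zero_v, add_zero, cSMul_zero]
    rfl
  smul_add s p q := by
    show (s.1 • (p.1 + q.1) + Phi D M s.2.1 (p.2 + q.2), cSMul s.2.2 (p.2 + q.2))
      = ((s.1 • p.1 + Phi D M s.2.1 p.2) + (s.1 • q.1 + Phi D M s.2.1 q.2),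
         cSMul s.2.2 p.2 + cSMul s.2.2 q.2)
    rw [smul_add, Phi_add_v, cSMul_add]
    refine Prod.ext ?_ rfl
    abel
  add_smul s t p := by
    show ((s + t).1 • p.1 + Phi D M (s + t).2.1 p.2, cSMul (s + t).2.2 p.2)
      = ((s.1 • p.1 + Phi D M s.2.1 p.2) + (t.1 • p.1 + Phi D M t.2.1 p.2),
         cSMul s.2.2 p.2 + cSMul t.2.2 p.2)
    show ((s.1 + t.1) • p.1 + Phi D M (s.2.1 + t.2.1) p.2, cSMul (s.2.2 + t.2.2) p.2) = _
    rw [add_smul, Phi_add_j, cSMul_add']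
    refine Prod.ext ?_ rfl
    abel
  zero_smul p := by
    show ((0 : OPE A ↥J).1 • p.1 + Phi D M (0 : OPE A ↥J).2.1 p.2, cSMul (0 : OPE A ↥J).2.2 p.2) = 0
    show ((0 : A) • p.1 + Phi D M 0 p.2, cSMul 0 p.2) = 0
    rw [zero_smul, Phi_zero_j, add_zero, cSMul_zero']
    rfl

lemma Fsmul_def (s : OPE A ↥J) (p : Fc D M) :
    s • p = (s.1 • p.1 + Phi D M s.2.1 p.2, cSMul s.2.2 p.2) := rfl

lemma Fc_add_def (p q : Fc D M) : p + q = (p.1 + q.1, p.2 + q.2) := rfl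

lemma Fc_ext {p q : Fc D M} (h1 : p.1 = q.1) (h2 : p.2 = q.2) : p = q := Prod.ext h1 h2

end functorF

section Fdef
open CategoryTheory
variable {A : Type u} [CommRing A] [Algebra ℂ A] [IsDomain A] {I J : Ideal A} (D : MD I J)

variable {M N P : Type u} [AddCommGroup M] [Module (OPE A ↥I) M]
  [AddCommGroup N] [Module (OPE A ↥I) N] [AddCommGroup P] [Module (OPE A ↥I) P]

/-- The `MA`-part of a morphism. -/
def MAmap (φ : M →ₗ[OPE A ↥I] N) : ↥(MA A ↥I M) →ₗ[A] ↥(MA A ↥I N) where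
  toFun m := ⟨φ m.val, by rw [mem_MA_iff, ← map_smul, mem_MA_iff.mp m.2]⟩
  map_add' m n := Subtype.ext (by simp only [AddSubgroup.coe_add, map_add])
  map_smul' a m := Subtype.ext (by simp only [RingHom.id_apply, smulA_val, map_smul])

@[simp] lemma MAmap_val (φ : M →ₗ[OPE A ↥I] N) (m : ↥(MA A ↥I M)) :
    (MAmap φ m : N) = φ m.val := rfl

/-- The `Minf`-part of a morphism. -/
def Minfmap (φ : M →ₗ[OPE A ↥I] N) (v : ↥(Minf A ↥I M)) : ↥(Minf A ↥I N) :=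
  ⟨φ v.val, by rw [mem_Minf_iff, ← map_smul, mem_Minf_iff.mp v.2]⟩

@[simp] lemma Minfmap_val (φ : M →ₗ[OPE A ↥I] N) (v : ↥(Minf A ↥I M)) :
    (Minfmap φ v : N) = φ v.val := rfl

/-- Functoriality of the `Fc` construction. -/
noncomputable def Fmapl (φ : M →ₗ[OPE A ↥I] N) : Fc D M →ₗ[OPE A ↥J] Fc D N where
  toFun p := ((MAmap φ).comp p.1, Minfmap φ p.2)
  map_add' p q := by
    refine Prod.ext ?_ (Subtype.ext ?_)
    · show (MAmap φ).comp (p.1 + q.1) = (MAmap φ).comp p.1 + (MAmap φ).comp q.1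
      ext x
      simp only [LinearMap.comp_apply, LinearMap.add_apply, AddSubgroup.coe_add, MAmap_val,
        map_add]
    · show φ (((p.2 : M) + q.2)) = _
      rw [map_add]; rfl
  map_smul' s p := by
    refine Prod.ext ?_ (Subtype.ext ?_)
    · show (MAmap φ).comp (s.1 • p.1 + Phi D M s.2.1 p.2)
        = s.1 • ((MAmap φ).comp p.1) + Phi D N s.2.1 (Minfmap φ p.2)
      ext x
      simp only [LinearMap.comp_apply, LinearMap.add_apply, LinearMap.smul_apply,
        AddSubgroup.coe_add, smulA_val, MAmap_val, Phi_val, map_add, map_smul, Minfmap_val]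
    · show φ (ρc A ↥I s.2.2 • (p.2 : M)) = ρc A ↥I s.2.2 • φ p.2.val
      rw [map_smul]

/-- The Morita functor associated to transport data `D`. -/
noncomputable def F : ModuleCat.{u} (OPE A ↥I) ⥤ ModuleCat.{u} (OPE A ↥J) where
  obj M := ModuleCat.of _ (Fc D M)
  map φ := ModuleCat.ofHom (Fmapl D φ.hom)
  map_id M := by
    refine ModuleCat.hom_ext (LinearMap.ext fun p => ?_)
    refine Prod.ext ?_ (Subtype.ext rfl)
    ext x
    rfl
  map_comp φ ψ := by
    refine ModuleCat.hom_ext (LinearMap.ext fun p => ?_)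
    refine Prod.ext ?_ (Subtype.ext rfl)
    ext x
    rfl

instance F_additive : (F D).Additive where
  map_add {M N f g} := by
    refine ModuleCat.hom_ext (LinearMap.ext fun p => ?_)
    refine Prod.ext ?_ (Subtype.ext rfl)
    ext x
    rfl

end Fdef

section unit
open CategoryTheory
variable {A : Type u} [CommRing A] [Algebra ℂ A] [IsDomain A] {I J : Ideal A}

lemma ρc_one_mul {V : Type u} [AddCommGroup V] [Module A V] (r : OPE A V) :
    ρc A V 1 * r = ρc A V r.2.2 := by
  rw [mul_def]; unfold OPE.mul ρc; simp

lemma ρa_mul_gen {V : Type u} [AddCommGroup V] [Module A V] (b : A) (r : OPE A V) :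
    ρa A V b * r = ρa A V (b * r.1) + ρi A V (b • r.2.1) := by
  rw [mul_def, add_def]; unfold OPE.mul ρa ρi; simp

/-- A Morita pair: transport data in both directions together with duality data. -/
structure MP (I J : Ideal A) where
  D : MD I J
  E : MD J I
  hXY : ∀ x ∈ D.X, ∀ y ∈ E.X, ∃ a : A, D.d * E.d * a = x * y
  hdb : ∃ l : List (↥D.X × ↥E.X), (l.map fun q => (q.1 : A) * (q.2 : A)).sum = D.d * E.d

variable (P : MP I J)

/-- Swapping a Morita pair. -/
def MP.symm : MP J I where
  D := P.E
  E := P.D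
  hXY y hy x hx := by
    obtain ⟨a, ha⟩ := P.hXY x hx y hy
    exact ⟨a, by rw [mul_comm P.E.d P.D.d, ha, mul_comm]⟩
  hdb := by
    obtain ⟨l, hl⟩ := P.hdb
    refine ⟨l.map Prod.swap, ?_⟩
    rw [List.map_map, mul_comm P.E.d P.D.d, ← hl]
    congr 1
    refine List.map_congr_left fun q _ => ?_
    simp [mul_comm]

lemma MP.dd_ne : P.D.d * P.E.d ≠ 0 := mul_ne_zero P.D.hd P.E.hd

noncomputable def MP.divA (x : ↥P.D.X) (y : ↥P.E.X) : A := (P.hXY x x.2 y y.2).choose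

lemma MP.divA_spec (x : ↥P.D.X) (y : ↥P.E.X) :
    P.D.d * P.E.d * P.divA x y = (x : A) * (y : A) := (P.hXY x x.2 y y.2).choose_spec

lemma MP.divA_eq (x : ↥P.D.X) (y : ↥P.E.X) (a : A)
    (h : P.D.d * P.E.d * a = (x : A) * (y : A)) : P.divA x y = a :=
  mul_left_cancel₀ P.dd_ne ((P.divA_spec x y).trans h.symm)

lemma MP.divA_add_left (x x' : ↥P.D.X) (y : ↥P.E.X) :
    P.divA (x + x') y = P.divA x y + P.divA x' y := by
  refine P.divA_eq _ _ _ ?_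
  push_cast
  rw [mul_add, P.divA_spec, P.divA_spec, add_mul]

lemma MP.divA_add_right (x : ↥P.D.X) (y y' : ↥P.E.X) :
    P.divA x (y + y') = P.divA x y + P.divA x y' := by
  refine P.divA_eq _ _ _ ?_
  push_cast
  rw [mul_add, P.divA_spec, P.divA_spec, mul_add]

lemma MP.divA_smul_left (a : A) (x : ↥P.D.X) (y : ↥P.E.X) :
    P.divA (a • x) y = a * P.divA x y := by
  refine P.divA_eq _ _ _ ?_
  push_cast
  rw [smul_eq_mul, mul_left_comm, P.divA_spec, mul_assoc]

lemma MP.divA_smul_right (a : A) (x : ↥P.D.X) (y : ↥P.E.X) :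
    P.divA x (a • y) = a * P.divA x y := by
  refine P.divA_eq _ _ _ ?_
  push_cast
  rw [smul_eq_mul, mul_left_comm, P.divA_spec, mul_left_comm]

/-- The key compatibility between the two division operations. -/
lemma MP.divI_divI (x : ↥P.D.X) (y : ↥P.E.X) (i : ↥I) :
    P.D.divI x (P.E.divI y i) = P.divA x y • i := by
  refine P.D.divI_eq _ _ _ ?_
  have h2 := P.E.divI_spec y i
  refine mul_left_cancel₀ P.E.hd ?_
  push_cast
  rw [smul_eq_mul]
  calc P.E.d * (P.D.d * (P.divA x y * (i : A)))
      = P.D.d * P.E.d * P.divA x y * (i : A) := by ring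
    _ = (x : A) * (y : A) * (i : A) := by rw [P.divA_spec]
    _ = (x : A) * (P.E.d * (P.E.divI y i : A)) := by rw [h2]; ring
    _ = P.E.d * ((x : A) * (P.E.divI y i : A)) := by ring

/-- The cross relation for the dual-basis computation. -/
lemma MP.divA_cross (x x' : ↥P.D.X) (y y' : ↥P.E.X) :
    P.divA x y • y' = P.divA x y' • y := by
  refine Subtype.ext ?_
  push_cast
  rw [smul_eq_mul, smul_eq_mul]
  refine mul_left_cancel₀ P.dd_ne ?_
  rw [← mul_assoc, P.divA_spec, ← mul_assoc, P.divA_spec]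
  ring

end unit

section unit2
open CategoryTheory
variable {A : Type u} [CommRing A] [Algebra ℂ A] [IsDomain A] {I J : Ideal A}
variable (D : MD I J) {M : Type u} [AddCommGroup M] [Module (OPE A ↥I) M]

lemma ρa_smul_Fc (a : A) (p : Fc D M) : ρa A ↥J a • p = (a • p.1, 0) := by
  rw [Fsmul_def]
  show (a • p.1 + Phi D M 0 p.2, cSMul 0 p.2) = _
  rw [Phi_zero_j, add_zero, cSMul_zero']

lemma ρi_smul_Fc (j : ↥J) (p : Fc D M) : ρi A ↥J j • p = (Phi D M j p.2, 0) := by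
  rw [Fsmul_def]
  show ((0 : A) • p.1 + Phi D M j p.2, cSMul 0 p.2) = _
  rw [zero_smul, zero_add, cSMul_zero']

lemma ρc_smul_Fc (c : ℂ) (p : Fc D M) : ρc A ↥J c • p = (0, cSMul c p.2) := by
  rw [Fsmul_def]
  show ((0 : A) • p.1 + Phi D M 0 p.2, cSMul c p.2) = _
  rw [zero_smul, zero_add, Phi_zero_j]

lemma MA_Fc_mem_iff (p : Fc D M) : p ∈ MA A ↥J (Fc D M) ↔ p.2 = 0 := by
  rw [mem_MA_iff, ρa_smul_Fc, one_smul]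
  constructor
  · intro h
    exact (congrArg Prod.snd h).symm
  · intro h
    exact Prod.ext rfl h.symm

lemma Minf_Fc_mem_iff (p : Fc D M) : p ∈ Minf A ↥J (Fc D M) ↔ p.1 = 0 := by
  rw [mem_Minf_iff, ρc_smul_Fc, cSMul_one]
  constructor
  · intro h
    exact (congrArg Prod.fst h).symm
  · intro h
    exact Prod.ext h.symm rfl

lemma smul_MA_Fc_val (a : A) (F : ↥(MA A ↥J (Fc D M))) :
    ((a • F : ↥(MA A ↥J (Fc D M))) : Fc D M) = (a • (F : Fc D M).1, 0) := by
  rw [smulA_val, ρa_smul_Fc]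

variable {D}
variable (P : MP I J)

/-- The inner component of the unit. -/
noncomputable def th (m : M) (y : ↥P.E.X) : ↥P.D.X →ₗ[A] ↥(MA A ↥I M) where
  toFun x := ⟨ρa A ↥I (P.divA x y) • m, ρa_smul_mem_MA _ _⟩
  map_add' x x' := Subtype.ext (by
    simp only [AddSubgroup.coe_add]
    rw [P.divA_add_left, ρa_add, add_smul])
  map_smul' a x := Subtype.ext (by
    simp only [RingHom.id_apply, smulA_val]
    rw [P.divA_smul_left, ← ρa_mul_ρa]; exact mul_smul _ _ _)

lemma th_val (m : M) (y : ↥P.E.X) (x : ↥P.D.X) :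
    (th P m y x : M) = ρa A ↥I (P.divA x y) • m := rfl

lemma th_add_m (m m' : M) (y : ↥P.E.X) : th P (m + m') y = th P m y + th P m' y := by
  ext x
  simp only [th_val, LinearMap.add_apply, AddSubgroup.coe_add, smul_add]

lemma th_add_y (m : M) (y y' : ↥P.E.X) : th P m (y + y') = th P m y + th P m y' := by
  ext x
  simp only [th_val, LinearMap.add_apply, AddSubgroup.coe_add]
  rw [P.divA_add_right, ρa_add, add_smul]

lemma th_smul_y (a : A) (m : M) (y : ↥P.E.X) : th P m (a • y) = a • th P m y := by
  ext x
  simp only [th_val, LinearMap.smul_apply, smulA_val]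
  rw [P.divA_smul_right, ← ρa_mul_ρa]; exact mul_smul _ _ _

/-- The `MA`-component of the unit. -/
noncomputable def etaA (m : M) : ↥P.E.X →ₗ[A] ↥(MA A ↥J (Fc P.D M)) where
  toFun y := ⟨(th P m y, 0), (MA_Fc_mem_iff P.D _).mpr rfl⟩
  map_add' y y' := Subtype.ext (by
    simp only [AddSubgroup.coe_add]
    refine (?_ : _ = _).trans (Fc_add_def P.D _ _).symm
    exact Prod.ext (th_add_y P m y y') (add_zero (0 : ↥(Minf A ↥I M))).symm)
  map_smul' a y := Subtype.ext (by
    simp only [RingHom.id_apply]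
    rw [smul_MA_Fc_val]
    exact Prod.ext (th_smul_y P a m y) rfl)

lemma etaA_val (m : M) (y : ↥P.E.X) :
    ((etaA P m y : ↥(MA A ↥J (Fc P.D M))) : Fc P.D M) = (th P m y, 0) := rfl

/-- The `Minf`-component of the unit. -/
noncomputable def etainf (m : M) : ↥(Minf A ↥J (Fc P.D M)) :=
  ⟨(0, ⟨ρc A ↥I 1 • m, ρc_smul_mem_Minf _ _⟩), (Minf_Fc_mem_iff P.D _).mpr rfl⟩

/-- The unit map. -/
noncomputable def eta : M →ₗ[OPE A ↥I] Fc P.E (Fc P.D M) where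
  toFun m := (etaA P m, etainf P m)
  map_add' m m' := by
    refine (?_ : _ = _).trans (Fc_add_def P.E _ _).symm
    refine Prod.ext ?_ (Subtype.ext ?_)
    · ext y
      simp only [etaA_val, LinearMap.add_apply, AddSubgroup.coe_add]
      refine (?_ : _ = _).trans (Fc_add_def P.D _ _).symm
      exact Prod.ext (th_add_m P m m' y) (add_zero (0 : ↥(Minf A ↥I M))).symm
    · show _ = ((etainf P m : Fc P.D M) + (etainf P m' : Fc P.D M))
      rw [Fc_add_def]
      unfold etainf
      refine Prod.ext (add_zero (0 : _)).symm (Subtype.ext ?_)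
      simp only [AddSubgroup.coe_add]
      rw [smul_add]
  map_smul' r m := by
    simp only [RingHom.id_apply]
    refine (?_ : _ = _).trans (Fsmul_def P.E _ _).symm
    refine Prod.ext ?_ (Subtype.ext ?_)
    · ext y
      simp only [LinearMap.add_apply, LinearMap.smul_apply, AddSubgroup.coe_add,
        smulA_val, Phi_val]
      rw [ρa_smul_Fc, ρi_smul_Fc]
      refine (?_ : _ = _).trans (Fc_add_def P.D _ _).symm
      simp only [etaA_val, add_zero]
      refine Prod.ext ?_ rfl
      ext x
      simp only [th_val, LinearMap.add_apply, AddSubgroup.coe_add, LinearMap.smul_apply,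
        smulA_val, Phi_val]
      have h1 : ρa A ↥I (P.divA x y) • (r • m)
          = ρa A ↥I (P.divA x y * r.1) • m + ρi A ↥I (P.divA x y • r.2.1) • m := by
        rw [← mul_smul, ρa_mul_gen, add_smul]
      have h2 : ρa A ↥I r.1 • ρa A ↥I (P.divA x y) • m = ρa A ↥I (P.divA x y * r.1) • m := by
        rw [← mul_smul, ρa_mul_ρa, mul_comm]
      have h3 : ρi A ↥I (P.divA x y • r.2.1) • (ρc A ↥I 1 • m : M)
          = ρi A ↥I (P.divA x y • r.2.1) • m := by
        rw [← mul_smul, ρi_mul_ρc, map_one, one_smul]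
      show ρa A ↥I (P.divA x y) • (r • m) = ρa A ↥I r.1 • ρa A ↥I (P.divA x y) • m
          + ρi A ↥I (P.D.divI x (P.E.divI y r.2.1)) • (ρc A ↥I 1 • m : M)
      rw [P.divI_divI, h1, h2, h3]
    · show (etainf P (r • m) : Fc P.D M) = (cSMul r.2.2 (etainf P m) : ↥(Minf A ↥J (Fc P.D M)))
      rw [cSMul_val, ρc_smul_Fc]
      refine Prod.ext rfl (Subtype.ext ?_)
      show ρc A ↥I 1 • (r • m) = _
      rw [cSMul_val]
      show _ = ρc A ↥I r.2.2 • (ρc A ↥I 1 • m : M)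
      rw [← mul_smul, ρc_one_mul, ← mul_smul, ρc_mul_ρc, mul_one]

end unit2

section unit3
variable {A : Type u} [CommRing A] [Algebra ℂ A] [IsDomain A] {I J : Ideal A}
variable (P : MP I J) {M : Type u} [AddCommGroup M] [Module (OPE A ↥I) M]

lemma ρc_smul_of_mem_MA (c : ℂ) {t : M} (ht : t ∈ MA A ↥I M) : ρc A ↥I c • t = 0 := by
  rw [← (mem_MA_iff.mp ht), ← mul_smul, ρc_mul_ρa, zero_smul]

lemma ρa_smul_of_mem_Minf (a : A) {t : M} (ht : t ∈ Minf A ↥I M) : ρa A ↥I a • t = 0 := by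
  rw [← (mem_Minf_iff.mp ht), ← mul_smul, ρa_mul_ρc, zero_smul]

lemma list_sum_smul_zero (r : OPE A ↥I) (l : List M) (h : ∀ t ∈ l, r • t = 0) :
    r • l.sum = 0 := by
  induction l with
  | nil => simp
  | cons a l ih =>
    rw [List.sum_cons, smul_add, h a List.mem_cons_self,
      ih fun t ht => h t (List.mem_cons_of_mem a ht), zero_add]

lemma sum_ρa_smul {α : Type*} (l : List α) (g : α → A) (m : M) :
    (l.map fun a => ρa A ↥I (g a) • m).sum = ρa A ↥I ((l.map g).sum) • m := by
  induction l with
  | nil => simp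
  | cons a l ih => rw [List.map_cons, List.map_cons, List.sum_cons, List.sum_cons, ih,
      ρa_add, add_smul]

lemma val_list_sum {H : Type*} [AddCommGroup H] {S : Type*} [SetLike S H]
    [AddSubgroupClass S H] (N : S) {α : Type*} (l : List α) (f : α → ↥N) :
    (((l.map f).sum : ↥N) : H) = (l.map fun a => ((f a : ↥N) : H)).sum := by
  induction l with
  | nil => simp
  | cons a l ih => simp [ih]

lemma linmap_list_sum {V W : Type u} [AddCommGroup V] [Module A V] [AddCommGroup W]
    [Module A W] (F : V →ₗ[A] W) {α : Type*} (l : List α) (g : α → V) :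
    (l.map fun a => F (g a)).sum = F ((l.map g).sum) := by
  induction l with
  | nil => simp
  | cons a l ih => simp [ih]

noncomputable def dbList : List (↥P.D.X × ↥P.E.X) := P.hdb.choose

lemma dbList_spec : ((dbList P).map fun q => (q.1 : A) * (q.2 : A)).sum = P.D.d * P.E.d :=
  P.hdb.choose_spec

lemma dbList_divA_sum : ((dbList P).map fun q => P.divA q.1 q.2).sum = 1 := by
  refine mul_left_cancel₀ P.dd_ne ?_
  rw [mul_one, ← List.sum_map_mul_left]
  conv_rhs => rw [← dbList_spec P]
  congr 1
  refine List.map_congr_left fun q _ => ?_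
  exact P.divA_spec q.1 q.2

variable (M) in
/-- The inverse of the unit map, as a bare function. -/
noncomputable def xiFun (p : Fc P.E (Fc P.D M)) : M :=
  ((dbList P).map fun q =>
    ((((p.1 q.2 : ↥(MA A ↥J (Fc P.D M))) : Fc P.D M).1 q.1 : ↥(MA A ↥I M)) : M)).sum
  + ((((p.2 : ↥(Minf A ↥J (Fc P.D M))) : Fc P.D M).2 : ↥(Minf A ↥I M)) : M)

lemma xi_eta (m : M) : xiFun P M (eta P m) = m := by
  unfold xiFun
  show ((dbList P).map fun q => ((th P m q.2 q.1 : ↥(MA A ↥I M)) : M)).sum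
      + ((ρc A ↥I 1 • m : M)) = m
  have : ((dbList P).map fun q => ((th P m q.2 q.1 : ↥(MA A ↥I M)) : M)).sum
      = ((dbList P).map fun q => ρa A ↥I (P.divA q.1 q.2) • m).sum := rfl
  rw [this, sum_ρa_smul, dbList_divA_sum, ← add_smul, ρa_one_add_ρc_one, one_smul]

lemma FvA_smul_apply (p : Fc P.E (Fc P.D M)) (a : A) (y : ↥P.E.X) :
    ((p.1 (a • y) : ↥(MA A ↥J (Fc P.D M))) : Fc P.D M).1
      = a • ((p.1 y : ↥(MA A ↥J (Fc P.D M))) : Fc P.D M).1 := by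
  rw [map_smul, smul_MA_Fc_val]

lemma eta_xi (p : Fc P.E (Fc P.D M)) : eta P (xiFun P M p) = p := by
  have hp1 : ∀ y : ↥P.E.X, ((p.1 y : ↥(MA A ↥J (Fc P.D M))) : Fc P.D M).2 = 0 :=
    fun y => (MA_Fc_mem_iff P.D _).mp (p.1 y).2
  have hp2 : ((p.2 : ↥(Minf A ↥J (Fc P.D M))) : Fc P.D M).1 = 0 :=
    (Minf_Fc_mem_iff P.D _).mp p.2.2
  show (etaA P (xiFun P M p), etainf P (xiFun P M p)) = p
  refine Prod.ext ?_ (Subtype.ext ?_)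
  · ext y
    rw [etaA_val]
    refine Fc_ext (D := P.D) (M := M) ?_ (hp1 y).symm
    ext x
    rw [th_val]
    unfold xiFun
    rw [smul_add, ρa_smul_of_mem_Minf _ (Subtype.mem _), add_zero]
    have key : ∀ q ∈ dbList P,
        ρa A ↥I (P.divA x y) •
          ((((p.1 q.2 : ↥(MA A ↥J (Fc P.D M))) : Fc P.D M).1 q.1 : ↥(MA A ↥I M)) : M)
        = ((((p.1 y : ↥(MA A ↥J (Fc P.D M))) : Fc P.D M).1 (P.divA x q.2 • q.1)
            : ↥(MA A ↥I M)) : M) := by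
      intro q _
      have inner : P.divA x y • (((p.1 q.2 : ↥(MA A ↥J (Fc P.D M))) : Fc P.D M).1 q.1)
          = ((p.1 y : ↥(MA A ↥J (Fc P.D M))) : Fc P.D M).1 (P.divA x q.2 • q.1) := by
        calc P.divA x y • (((p.1 q.2 : ↥(MA A ↥J (Fc P.D M))) : Fc P.D M).1 q.1)
            = (P.divA x y • ((p.1 q.2 : ↥(MA A ↥J (Fc P.D M))) : Fc P.D M).1) q.1 :=
              (LinearMap.smul_apply _ _ _).symm
          _ = (((p.1 (P.divA x y • q.2) : ↥(MA A ↥J (Fc P.D M))) : Fc P.D M).1) q.1 := by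
              rw [FvA_smul_apply]
          _ = (((p.1 (P.divA x q.2 • y) : ↥(MA A ↥J (Fc P.D M))) : Fc P.D M).1) q.1 := by
              rw [P.divA_cross x x y q.2]
          _ = (P.divA x q.2 • ((p.1 y : ↥(MA A ↥J (Fc P.D M))) : Fc P.D M).1) q.1 := by
              rw [FvA_smul_apply]
          _ = ((p.1 y : ↥(MA A ↥J (Fc P.D M))) : Fc P.D M).1 (P.divA x q.2 • q.1) := by
              rw [LinearMap.smul_apply, ← map_smul]
      calc ρa A ↥I (P.divA x y) •
            ((((p.1 q.2 : ↥(MA A ↥J (Fc P.D M))) : Fc P.D M).1 q.1 : ↥(MA A ↥I M)) : M)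
          = ((P.divA x y • (((p.1 q.2 : ↥(MA A ↥J (Fc P.D M))) : Fc P.D M).1 q.1)
              : ↥(MA A ↥I M)) : M) := rfl
        _ = _ := by rw [inner]
    have hsum : ((dbList P).map fun q => P.divA x q.2 • q.1).sum = x := by
      refine Subtype.ext ?_
      rw [val_list_sum]
      refine mul_left_cancel₀ P.dd_ne ?_
      rw [← List.sum_map_mul_left]
      have : ((dbList P).map fun q : ↥P.D.X × ↥P.E.X =>
            P.D.d * P.E.d * ((P.divA x q.2 • q.1 : ↥P.D.X) : A)).sum
          = ((dbList P).map fun q : ↥P.D.X × ↥P.E.X =>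
            (x : A) * ((q.1 : A) * (q.2 : A))).sum := by
        congr 1
        refine List.map_congr_left fun q _ => ?_
        rw [SetLike.val_smul, smul_eq_mul]
        linear_combination ((q.1 : A)) * P.divA_spec x q.2
      rw [this, List.sum_map_mul_left, dbList_spec, mul_comm]
    calc ρa A ↥I (P.divA x y) • ((dbList P).map fun q =>
          ((((p.1 q.2 : ↥(MA A ↥J (Fc P.D M))) : Fc P.D M).1 q.1 : ↥(MA A ↥I M)) : M)).sum
        = ((dbList P).map fun q => ρa A ↥I (P.divA x y) •
            ((((p.1 q.2 : ↥(MA A ↥J (Fc P.D M))) : Fc P.D M).1 q.1 : ↥(MA A ↥I M)) : M)).sum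
          := by rw [List.smul_sum, List.map_map]; rfl
      _ = ((dbList P).map fun q =>
            ((((p.1 y : ↥(MA A ↥J (Fc P.D M))) : Fc P.D M).1 (P.divA x q.2 • q.1)
              : ↥(MA A ↥I M)) : M)).sum := by
          congr 1; exact List.map_congr_left key
      _ = ((((p.1 y : ↥(MA A ↥J (Fc P.D M))) : Fc P.D M).1
              (((dbList P).map fun q => P.divA x q.2 • q.1).sum) : ↥(MA A ↥I M)) : M) := by
          rw [← val_list_sum, linmap_list_sum]
      _ = ((((p.1 y : ↥(MA A ↥J (Fc P.D M))) : Fc P.D M).1 x : ↥(MA A ↥I M)) : M) := by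
          rw [hsum]
  · refine Fc_ext (D := P.D) (M := M) hp2.symm ?_
    refine Subtype.ext ?_
    show ρc A ↥I 1 • xiFun P M p = _
    unfold xiFun
    rw [smul_add, list_sum_smul_zero, zero_add, mem_Minf_iff.mp (Subtype.mem _)]
    intro t ht
    obtain ⟨q, _, rfl⟩ := List.mem_map.mp ht
    exact ρc_smul_of_mem_MA 1 (Subtype.mem _)

end unit3

section assemble
open CategoryTheory
variable {A : Type u} [CommRing A] [Algebra ℂ A] [IsDomain A] {I J : Ideal A}
variable (P : MP I J)

lemma eta_natural {M M' : Type u} [AddCommGroup M] [Module (OPE A ↥I) M]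
    [AddCommGroup M'] [Module (OPE A ↥I) M'] (φ : M →ₗ[OPE A ↥I] M') (m : M) :
    Fmapl P.E (Fmapl P.D φ) (eta P m) = eta P (φ m) := by
  show ((MAmap (Fmapl P.D φ)).comp (etaA P m), Minfmap (Fmapl P.D φ) (etainf P m))
    = (etaA P (φ m), etainf P (φ m))
  refine Prod.ext ?_ (Subtype.ext ?_)
  · ext y
    rw [LinearMap.comp_apply, MAmap_val, etaA_val, etaA_val]
    show Fmapl P.D φ (th P m y, (0 : ↥(Minf A ↥I M))) = _
    show ((MAmap φ).comp (th P m y), Minfmap φ (0 : ↥(Minf A ↥I M))) = _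
    refine Fc_ext (D := P.D) (M := M') ?_ (Subtype.ext (map_zero φ))
    ext x
    rw [LinearMap.comp_apply, MAmap_val, th_val, th_val, map_smul]
  · rw [Minfmap_val]
    show Fmapl P.D φ ((0 : ↥P.D.X →ₗ[A] ↥(MA A ↥I M)), _) = _
    show ((MAmap φ).comp (0 : ↥P.D.X →ₗ[A] ↥(MA A ↥I M)),
        Minfmap φ ⟨ρc A ↥I 1 • m, ρc_smul_mem_Minf _ _⟩) = (etainf P (φ m) : Fc P.D M')
    refine Fc_ext (D := P.D) (M := M') (LinearMap.comp_zero _) (Subtype.ext ?_)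
    rw [Minfmap_val]
    show φ (ρc A ↥I 1 • m) = ρc A ↥I 1 • φ m
    rw [map_smul]

/-- The unit as a linear equivalence. -/
noncomputable def etaEquiv (M : Type u) [AddCommGroup M] [Module (OPE A ↥I) M] :
    M ≃ₗ[OPE A ↥I] Fc P.E (Fc P.D M) :=
  { eta P with
    invFun := xiFun P M
    left_inv := xi_eta P
    right_inv := eta_xi P }

/-- The unit isomorphism. -/
noncomputable def unitIso : 𝟭 (ModuleCat.{u} (OPE A ↥I)) ≅ F P.D ⋙ F P.E :=
  NatIso.ofComponents
    (fun M => LinearEquiv.toModuleIso (etaEquiv P M))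
    (fun {M N} φ => by
      refine ModuleCat.hom_ext (LinearMap.ext fun m => ?_)
      exact (eta_natural P φ.hom m).symm)

/-- The Morita equivalence between the two one-point extensions. -/
noncomputable def moritaEquiv : ModuleCat.{u} (OPE A ↥I) ≌ ModuleCat.{u} (OPE A ↥J) :=
  CategoryTheory.Equivalence.mk (F P.D) (F P.E) (unitIso P) (unitIso P.symm).symm

lemma moritaEquiv_functor : (moritaEquiv P).functor = F P.D := rfl

end assemble

section arith
open FractionalIdeal
open scoped nonZeroDivisors
variable {A : Type u} [CommRing A] [IsDomain A] [IsDedekindDomain A] [Algebra ℂ A]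

theorem exists_MP (I J : Ideal A) (hI : I ≠ ⊥) (hJ : J ≠ ⊥) : Nonempty (MP I J) := by
  classical
  let K := FractionRing A
  have hI0 : (I : FractionalIdeal A⁰ K) ≠ 0 := coeIdeal_ne_zero.mpr hI
  have hJ0 : (J : FractionalIdeal A⁰ K) ≠ 0 := coeIdeal_ne_zero.mpr hJ
  obtain ⟨d, X, hd, hL'⟩ :=
    exists_eq_spanSingleton_mul ((I : FractionalIdeal A⁰ K) * (J : FractionalIdeal A⁰ K)⁻¹)
  obtain ⟨e, Y, he, hL⟩ :=
    exists_eq_spanSingleton_mul ((J : FractionalIdeal A⁰ K) * (I : FractionalIdeal A⁰ K)⁻¹)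
  have hdK : algebraMap A K d ≠ 0 := by
    simpa using (map_ne_zero_iff _ (IsFractionRing.injective A K)).mpr hd
  have heK : algebraMap A K e ≠ 0 := by
    simpa using (map_ne_zero_iff _ (IsFractionRing.injective A K)).mpr he
  have hXfi : (X : FractionalIdeal A⁰ K)
      = spanSingleton A⁰ (algebraMap A K d) *
        ((I : FractionalIdeal A⁰ K) * (J : FractionalIdeal A⁰ K)⁻¹) := by
    rw [hL', ← mul_assoc, spanSingleton_mul_spanSingleton, mul_inv_cancel₀ hdK,
      spanSingleton_one, one_mul]
  have hYfi : (Y : FractionalIdeal A⁰ K)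
      = spanSingleton A⁰ (algebraMap A K e) *
        ((J : FractionalIdeal A⁰ K) * (I : FractionalIdeal A⁰ K)⁻¹) := by
    rw [hL, ← mul_assoc, spanSingleton_mul_spanSingleton, mul_inv_cancel₀ heK,
      spanSingleton_one, one_mul]
  -- X * J = d • I
  have hXJ_eq : (X : FractionalIdeal A⁰ K) * J
      = spanSingleton A⁰ (algebraMap A K d) * I := by
    rw [hXfi]
    have : (I : FractionalIdeal A⁰ K) * (J : FractionalIdeal A⁰ K)⁻¹
        * (J : FractionalIdeal A⁰ K) = I := by
      rw [mul_assoc, inv_mul_cancel₀ hJ0, mul_one]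
    rw [mul_assoc, this]
  have hYI_eq : (Y : FractionalIdeal A⁰ K) * I
      = spanSingleton A⁰ (algebraMap A K e) * J := by
    rw [hYfi]
    have : (J : FractionalIdeal A⁰ K) * (I : FractionalIdeal A⁰ K)⁻¹
        * (I : FractionalIdeal A⁰ K) = J := by
      rw [mul_assoc, inv_mul_cancel₀ hI0, mul_one]
    rw [mul_assoc, this]
  have hXY_eq : (X : FractionalIdeal A⁰ K) * Y
      = spanSingleton A⁰ (algebraMap A K (d * e)) := by
    rw [hXfi, hYfi]
    have hring : spanSingleton A⁰ (algebraMap A K d) *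
          ((I : FractionalIdeal A⁰ K) * (J : FractionalIdeal A⁰ K)⁻¹) *
        (spanSingleton A⁰ (algebraMap A K e) *
          ((J : FractionalIdeal A⁰ K) * (I : FractionalIdeal A⁰ K)⁻¹))
      = spanSingleton A⁰ (algebraMap A K d) * spanSingleton A⁰ (algebraMap A K e) *
        (((I : FractionalIdeal A⁰ K) * (I : FractionalIdeal A⁰ K)⁻¹) *
         ((J : FractionalIdeal A⁰ K)⁻¹ * (J : FractionalIdeal A⁰ K))) := by ring
    rw [hring, mul_inv_cancel₀ hI0, inv_mul_cancel₀ hJ0, mul_one, mul_one,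
      spanSingleton_mul_spanSingleton, ← _root_.map_mul]
  -- elementwise consequences
  have inj := IsFractionRing.injective A K
  have hXJ : ∀ x ∈ X, ∀ j ∈ J, ∃ i ∈ I, d * i = x * j := by
    intro x hx j hj
    have hmem : algebraMap A K x * algebraMap A K j
        ∈ (X : FractionalIdeal A⁰ K) * (J : FractionalIdeal A⁰ K) :=
      mul_mem_mul ((mem_coeIdeal _).mpr ⟨x, hx, rfl⟩) ((mem_coeIdeal _).mpr ⟨j, hj, rfl⟩)
    rw [hXJ_eq, mem_singleton_mul] at hmem
    obtain ⟨y', hy', hxy⟩ := hmem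
    obtain ⟨i, hi, rfl⟩ := (mem_coeIdeal _).mp hy'
    refine ⟨i, hi, inj ?_⟩
    rw [_root_.map_mul, _root_.map_mul, ← hxy]
  have hYI : ∀ y ∈ Y, ∀ i ∈ I, ∃ j ∈ J, e * j = y * i := by
    intro y hy i hi
    have hmem : algebraMap A K y * algebraMap A K i
        ∈ (Y : FractionalIdeal A⁰ K) * (I : FractionalIdeal A⁰ K) :=
      mul_mem_mul ((mem_coeIdeal _).mpr ⟨y, hy, rfl⟩) ((mem_coeIdeal _).mpr ⟨i, hi, rfl⟩)
    rw [hYI_eq, mem_singleton_mul] at hmem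
    obtain ⟨y', hy', hxy⟩ := hmem
    obtain ⟨j, hj, rfl⟩ := (mem_coeIdeal _).mp hy'
    refine ⟨j, hj, inj ?_⟩
    rw [_root_.map_mul, _root_.map_mul, ← hxy]
  have hXY : ∀ x ∈ X, ∀ y ∈ Y, ∃ a : A, d * e * a = x * y := by
    intro x hx y hy
    have hmem : algebraMap A K x * algebraMap A K y
        ∈ (X : FractionalIdeal A⁰ K) * (Y : FractionalIdeal A⁰ K) :=
      mul_mem_mul ((mem_coeIdeal _).mpr ⟨x, hx, rfl⟩) ((mem_coeIdeal _).mpr ⟨y, hy, rfl⟩)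
    rw [hXY_eq, mem_spanSingleton] at hmem
    obtain ⟨a, ha⟩ := hmem
    refine ⟨a, inj ?_⟩
    calc algebraMap A K (d * e * a)
        = algebraMap A K a * algebraMap A K (d * e) := by rw [_root_.map_mul, mul_comm]
      _ = a • algebraMap A K (d * e) := (Algebra.smul_def _ _).symm
      _ = algebraMap A K x * algebraMap A K y := ha
      _ = algebraMap A K (x * y) := (_root_.map_mul _ _ _).symm
  have hde_mem : d * e ∈ X * Y := by
    have hmem : algebraMap A K (d * e) ∈ (X : FractionalIdeal A⁰ K) * (Y : FractionalIdeal A⁰ K) := by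
      rw [hXY_eq]
      exact mem_spanSingleton_self _ _
    rw [← coeIdeal_mul, mem_coeIdeal] at hmem
    obtain ⟨a, ha, haeq⟩ := hmem
    rwa [inj haeq] at ha
  have hdb : ∃ l : List (↥X × ↥Y), (l.map fun q => (q.1 : A) * (q.2 : A)).sum = d * e := by
    refine Submodule.mul_induction_on hde_mem ?_ ?_
    · intro x hx y hy
      exact ⟨[(⟨x, hx⟩, ⟨y, hy⟩)], by simp⟩
    · rintro z1 z2 ⟨l1, h1⟩ ⟨l2, h2⟩
      exact ⟨l1 ++ l2, by rw [List.map_append, List.sum_append, h1, h2]⟩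
  exact ⟨⟨⟨X, d, hd, hXJ⟩, ⟨Y, e, he, hYI⟩, hXY, hdb⟩⟩

end arith
end Stmt10

open CategoryTheory in
/-- Let `A` be the coordinate ring of a smooth affine irreducible
curve over ℂ (an integral domain, finitely generated as a ℂ-algebra, which is a
Dedekind domain) and let `I`, `J` be nonzero ideals of `A`.  Then the one-point
extensions `A[I]` and `A[J]` are Morita equivalent: the categories of left modules
are equivalent via an additive functor. -/
theorem stmt10 (A : Type u) [CommRing A] [IsDomain A] [IsDedekindDomain A] [Algebra ℂ A]
    (hfg : Algebra.FiniteType ℂ A)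
    (I J : Ideal A) (hI : I ≠ ⊥) (hJ : J ≠ ⊥) :
    ∃ e : ModuleCat.{u} (OPE A ↥I) ≌ ModuleCat.{u} (OPE A ↥J), e.functor.Additive := by
  obtain ⟨P⟩ := Stmt10.exists_MP I J hI hJ
  exact ⟨Stmt10.moritaEquiv P, Stmt10.F_additive P.D⟩
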